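/- Let $q \ge 0$ be an integer and let $X_{-q}, \dots, X_q$ be independent real-valued random variables with $X_n$ Gaussian with mean $\mu_n$ and variance $\sigma_n^2$. For $t \in \mathbb{R}$ define $X_{\mathrm{interp}}(t) = \sum_{n=-q}^{q} \mathrm{sinc}(t - n)\, X_n$. Then the variance of $X_{\mathrm{interp}}(t)$ equals $\sum_{n=-q}^{q} \mathrm{sinc}^2(t-n)\, \sigma_n^2$ and satisfies $\mathrm{Var}(X_{\mathrm{interp}}(t)) \le \Big(3 + \frac{4}{\pi^2}\Big)\max_{-q \le n \le q} \sigma_n^2$. -/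

import Mathlib

open scoped Real NNReal ENNReal
open MeasureTheory ProbabilityTheory Filter Set

/-- Normalized cardinal sine: `sinc x = sin (π x) / (π x)` for `x ≠ 0`, `sinc 0 = 1`. -/
noncomputable def sinc (x : ℝ) : ℝ := if x = 0 then 1 else Real.sin (π * x) / (π * x)

section GaussAux

lemma rpow_two_eq (x : ℝ) : x ^ (2:ℝ) = x ^ 2 := by
  rw [show (2:ℝ) = ((2:ℕ):ℝ) by norm_num, Real.rpow_natCast]

lemma integrable_sq_mul_exp {b : ℝ} (hb : 0 < b) :
    Integrable (fun x : ℝ => x ^ 2 * Real.exp (-b * x ^ 2)) := by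
  have h := integrable_rpow_mul_exp_neg_mul_sq hb (s := 2) (by norm_num)
  have : (fun x : ℝ => x ^ (2:ℝ) * Real.exp (-b * x ^ 2))
      = fun x : ℝ => x ^ 2 * Real.exp (-b * x ^ 2) := by
    funext x; rw [rpow_two_eq]
  rwa [this] at h

lemma tendsto_mul_exp_atTop {b : ℝ} (hb : 0 < b) :
    Tendsto (fun x : ℝ => x * Real.exp (-b * x ^ 2)) atTop (nhds 0) := by
  have h := rpow_mul_exp_neg_mul_sq_isLittleO_exp_neg hb 1
  have h2 : Tendsto (fun x : ℝ => Real.exp (-(1/2) * x)) atTop (nhds 0) := by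
    apply Real.tendsto_exp_atBot.comp
    rw [tendsto_const_mul_atBot_of_neg (by norm_num : (-(1/2):ℝ) < 0)]
    exact tendsto_id
  have h3 := h.trans_tendsto h2
  have : (fun x : ℝ => x ^ (1:ℝ) * Real.exp (-b * x ^ 2))
      = fun x : ℝ => x * Real.exp (-b * x ^ 2) := by
    funext x; rw [Real.rpow_one]
  rwa [this] at h3

lemma integral_sq_mul_exp {b : ℝ} (hb : 0 < b) :
    ∫ x : ℝ, x ^ 2 * Real.exp (-b * x ^ 2) = (2*b)⁻¹ * Real.sqrt (π / b) := by
  set f : ℝ → ℝ := fun x => x * Real.exp (-b * x ^ 2) with hf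
  set F : ℝ → ℝ := fun x => (1 - 2*b*x^2) * Real.exp (-b * x ^ 2) with hF
  have hderiv : ∀ x : ℝ, HasDerivAt f (F x) x := by
    intro x
    have h1 : HasDerivAt (fun y : ℝ => -b * y ^ 2) (-b * (2 * x)) x := by
      have := (hasDerivAt_pow 2 x).const_mul (-b)
      simpa [mul_comm] using this
    have h2 : HasDerivAt (fun y : ℝ => Real.exp (-b * y ^ 2))
        (Real.exp (-b * x^2) * (-b * (2*x))) x := (Real.hasDerivAt_exp _).comp x h1
    have h3 := (hasDerivAt_id x).mul h2
    refine HasDerivAt.congr_deriv h3 ?_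
    simp only [hF, id_eq]
    ring
  have hexp : Integrable (fun x : ℝ => Real.exp (-b * x^2)) := integrable_exp_neg_mul_sq hb
  have hsq : Integrable (fun x : ℝ => x ^ 2 * Real.exp (-b * x ^ 2)) := integrable_sq_mul_exp hb
  have hintF : Integrable F := by
    have h2 := hsq.const_mul (2*b)
    refine (hexp.sub h2).congr (Filter.Eventually.of_forall fun x => ?_)
    simp only [hF, Pi.sub_apply]; ring
  have htop : Tendsto f atTop (nhds 0) := tendsto_mul_exp_atTop hb
  have hbot : Tendsto f atBot (nhds 0) := by
    have h1 : Tendsto (fun x : ℝ => f (-x)) atTop (nhds 0) := by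
      have : (fun x : ℝ => f (-x)) = fun x => -(f x) := by
        funext x; simp only [hf]; ring_nf
      rw [this]
      simpa using htop.neg
    have h4 := h1.comp tendsto_neg_atBot_atTop
    exact h4.congr (fun x => by simp [Function.comp])
  have hIoi : ∫ x in Ioi (0:ℝ), F x = 0 - f 0 :=
    integral_Ioi_of_hasDerivAt_of_tendsto (hderiv 0).continuousAt.continuousWithinAt
      (fun x _ => hderiv x) hintF.integrableOn htop
  have hIic : ∫ x in Iic (0:ℝ), F x = f 0 - 0 :=
    integral_Iic_of_hasDerivAt_of_tendsto (hderiv 0).continuousAt.continuousWithinAt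
      (fun x _ => hderiv x) hintF.integrableOn hbot
  have hzero : ∫ x : ℝ, F x = 0 := by
    rw [← intervalIntegral.integral_Iic_add_Ioi hintF.integrableOn hintF.integrableOn, hIoi, hIic]
    ring
  have hsplit : ∫ x : ℝ, F x
      = (∫ x : ℝ, Real.exp (-b * x^2)) - 2*b * ∫ x : ℝ, x^2 * Real.exp (-b*x^2) := by
    rw [← integral_const_mul, ← integral_sub hexp (hsq.const_mul (2*b))]
    congr 1; funext x; simp only [hF]; ring
  have hg : ∫ x : ℝ, Real.exp (-b * x^2) = Real.sqrt (π / b) := integral_gaussian b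
  rw [hzero, hg] at hsplit
  have hb' : (2*b) ≠ 0 := by positivity
  field_simp at hsplit ⊢
  linarith

lemma integral_odd_exp {b : ℝ} : ∫ x : ℝ, x * Real.exp (-b * x ^ 2) = 0 := by
  have h := integral_neg_eq_self (fun y : ℝ => y * Real.exp (-b * y ^ 2)) (volume : Measure ℝ)
  simp only [neg_sq, neg_mul] at h
  have h2 : ∫ x : ℝ, -(x * Real.exp (-b * x ^ 2)) = ∫ x : ℝ, x * Real.exp (-b * x ^ 2) := by
    simpa [neg_mul] using h
  rw [integral_neg] at h2
  linarith

end GaussAux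
section GaussMoments

open Real

variable {m : ℝ} {v : ℝ≥0}

lemma gaussianPDFReal_eq (m : ℝ) (v : ℝ≥0) (x : ℝ) :
    gaussianPDFReal m v x
      = (Real.sqrt (2 * π * v))⁻¹ * Real.exp (-(2*(v:ℝ))⁻¹ * (x - m)^2) := by
  rw [gaussianPDFReal]
  congr 1
  congr 1
  field_simp

lemma gaussianReal_integral_eq (hv : v ≠ 0) (g : ℝ → ℝ) :
    ∫ x, g x ∂(gaussianReal m v) = ∫ x, g x * gaussianPDFReal m v x := by
  rw [gaussianReal_of_var_ne_zero _ hv]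
  have h2 := integral_withDensity_eq_integral_smul (μ := (volume : Measure ℝ))
    (f := fun x => Real.toNNReal (gaussianPDFReal m v x))
    ((measurable_gaussianPDFReal m v).real_toNNReal) g
  have h1 : (gaussianPDF m v)
      = fun x => ((Real.toNNReal (gaussianPDFReal m v x) : ℝ≥0) : ENNReal) := rfl
  rw [h1]; rw [h2]
  congr 1; funext x
  simp only [NNReal.smul_def, Real.coe_toNNReal _ (gaussianPDFReal_nonneg m v x),
    smul_eq_mul]
  ring

lemma gaussianReal_integrable (hv : v ≠ 0) {g : ℝ → ℝ}
    (h : Integrable (fun x => g x * gaussianPDFReal m v x)) :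
    Integrable g (gaussianReal m v) := by
  rw [gaussianReal_of_var_ne_zero _ hv]
  rw [integrable_withDensity_iff (measurable_gaussianPDF m v)
    (Filter.Eventually.of_forall fun x => ENNReal.ofReal_lt_top)]
  refine h.congr (Filter.Eventually.of_forall fun x => ?_)
  simp [gaussianPDF, ENNReal.toReal_ofReal (gaussianPDFReal_nonneg m v x)]

lemma gaussian_facts (m : ℝ) (v : ℝ≥0) :
    Integrable (fun x : ℝ => x) (gaussianReal m v) ∧
    Integrable (fun x : ℝ => x ^ 2) (gaussianReal m v) ∧
    (∫ x, x ∂(gaussianReal m v)) = m ∧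
    (∫ x, x ^ 2 ∂(gaussianReal m v)) = (v : ℝ) + m ^ 2 := by
  by_cases hv : v = 0
  · subst hv
    rw [gaussianReal_zero_var]
    refine ⟨?_, ?_, ?_, ?_⟩
    · exact (integrable_congr (ae_eq_dirac' measurable_id)).mpr (integrable_const _)
    · exact (integrable_congr (ae_eq_dirac' (measurable_id.pow_const 2))).mpr
        (integrable_const _)
    · simp [integral_dirac]
    · simp [integral_dirac]
  · have hvpos : (0:ℝ) < v := by positivity
    set b : ℝ := (2*(v:ℝ))⁻¹ with hbdef
    have hb : 0 < b := by positivity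
    set c : ℝ := (Real.sqrt (2 * π * v))⁻¹ with hcdef
    have hcpos : 0 < c := by
      have : (0:ℝ) < 2 * π * v := by positivity
      positivity
    have hsqrt : Real.sqrt (π / b) = Real.sqrt (2 * π * (v:ℝ)) := by
      congr 1
      rw [hbdef]
      field_simp
    have hc1 : c * Real.sqrt (π / b) = 1 := by
      rw [hsqrt, hcdef]
      have : (0:ℝ) < 2 * π * v := by positivity
      rw [inv_mul_cancel₀ (by positivity : Real.sqrt (2 * π * (v:ℝ)) ≠ 0)]
    have h2b : (2*b)⁻¹ = (v:ℝ) := by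
      rw [hbdef]
      field_simp
    have hexp : Integrable (fun y : ℝ => Real.exp (-b * y^2)) := integrable_exp_neg_mul_sq hb
    have hlin : Integrable (fun y : ℝ => y * Real.exp (-b * y^2)) :=
      integrable_mul_exp_neg_mul_sq hb
    have hsq : Integrable (fun y : ℝ => y^2 * Real.exp (-b * y^2)) := integrable_sq_mul_exp hb
    have hI0 : ∫ y : ℝ, Real.exp (-b * y^2) = Real.sqrt (π / b) := integral_gaussian b
    have hI1 : ∫ y : ℝ, y * Real.exp (-b * y^2) = 0 := integral_odd_exp
    have hI2 : ∫ y : ℝ, y^2 * Real.exp (-b * y^2) = (2*b)⁻¹ * Real.sqrt (π / b) :=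
      integral_sq_mul_exp hb
    -- integrability of moments against the pdf
    have hpdf : ∀ x, gaussianPDFReal m v x = c * Real.exp (-b * (x - m)^2) := fun x =>
      gaussianPDFReal_eq m v x
    have hint1 : Integrable (fun x : ℝ => x * gaussianPDFReal m v x) := by
      have h : Integrable (fun y : ℝ => (y + m) * (c * Real.exp (-b * y^2))) := by
        have := ((hlin.const_mul c).add ((hexp.const_mul (c*m))))
        refine this.congr (Filter.Eventually.of_forall fun y => ?_)
        simp only [Pi.add_apply]
        ring
      have h2 := h.comp_sub_right m
      refine h2.congr (Filter.Eventually.of_forall fun x => ?_)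
      simp only [hpdf]
      ring
    have hint2 : Integrable (fun x : ℝ => x^2 * gaussianPDFReal m v x) := by
      have h : Integrable (fun y : ℝ => (y + m)^2 * (c * Real.exp (-b * y^2))) := by
        have := ((hsq.const_mul c).add ((hlin.const_mul (2*c*m)))).add
          (hexp.const_mul (c*m^2))
        refine this.congr (Filter.Eventually.of_forall fun y => ?_)
        simp only [Pi.add_apply]
        ring
      have h2 := h.comp_sub_right m
      refine h2.congr (Filter.Eventually.of_forall fun x => ?_)
      simp only [hpdf]
      ring
    refine ⟨gaussianReal_integrable hv hint1, gaussianReal_integrable hv hint2, ?_, ?_⟩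
    · rw [gaussianReal_integral_eq hv]
      have heq : (fun x : ℝ => x * gaussianPDFReal m v x)
          = fun x => (fun y => (y + m) * (c * Real.exp (-b * y^2))) (x - m) := by
        funext x; simp only [hpdf]; ring
      rw [heq, integral_sub_right_eq_self (fun y => (y + m) * (c * Real.exp (-b * y^2))) m]
      have heq2 : (fun y : ℝ => (y + m) * (c * Real.exp (-b * y^2)))
          = fun y => c * (y * Real.exp (-b * y^2)) + (c*m) * Real.exp (-b * y^2) := by
        funext y; ring
      rw [heq2, integral_add (hlin.const_mul c) (hexp.const_mul (c*m)),
        integral_const_mul, integral_const_mul, hI0, hI1]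
      rw [mul_zero, zero_add, mul_assoc, mul_comm (m : ℝ) _, ← mul_assoc, hc1, one_mul]
    · rw [gaussianReal_integral_eq hv]
      have heq : (fun x : ℝ => x^2 * gaussianPDFReal m v x)
          = fun x => (fun y => (y + m)^2 * (c * Real.exp (-b * y^2))) (x - m) := by
        funext x; simp only [hpdf]; ring
      rw [heq, integral_sub_right_eq_self (fun y => (y + m)^2 * (c * Real.exp (-b * y^2))) m]
      have heq2 : (fun y : ℝ => (y + m)^2 * (c * Real.exp (-b * y^2)))
          = fun y => c * (y^2 * Real.exp (-b * y^2))
            + ((2*c*m) * (y * Real.exp (-b * y^2)) + (c*m^2) * Real.exp (-b * y^2)) := by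
        funext y; ring
      have ha : Integrable (fun y : ℝ => c * (y^2 * Real.exp (-b * y^2))) := hsq.const_mul c
      have hbc : Integrable (fun y : ℝ => 2*c*m * (y * Real.exp (-b * y^2))
          + c*m^2 * Real.exp (-b*y^2)) :=
        (hlin.const_mul (2*c*m)).add (hexp.const_mul (c*m^2))
      rw [heq2, integral_add ha hbc,
        integral_add (hlin.const_mul (2*c*m)) (hexp.const_mul (c*m^2)),
        integral_const_mul, integral_const_mul, integral_const_mul, hI0, hI1, hI2]
      rw [mul_zero, zero_add]
      have : c * ((2*b)⁻¹ * Real.sqrt (π / b)) = (v:ℝ) := by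
        rw [← h2b]; rw [show c * ((2*b)⁻¹ * Real.sqrt (π / b)) = (2*b)⁻¹ * (c * Real.sqrt (π / b)) by ring, hc1, mul_one]
      rw [this]
      have : c * m^2 * Real.sqrt (π / b) = m^2 * (c * Real.sqrt (π / b)) := by ring
      rw [this, hc1, mul_one]

end GaussMoments

section VarOfGauss

lemma var_of_gauss {Ω : Type*} [MeasureSpace Ω] [IsProbabilityMeasure (ℙ : Measure Ω)]
    {Y : Ω → ℝ} (hY : Measurable Y) {m : ℝ} {v : ℝ≥0}
    (h : Measure.map Y ℙ = gaussianReal m v) :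
    MeasureTheory.MemLp Y 2 ℙ ∧ variance Y ℙ = (v : ℝ) := by
  obtain ⟨hi1, hi2, hm, hsq⟩ := gaussian_facts m v
  have hmem : MeasureTheory.MemLp Y 2 ℙ := by
    have hmap : MeasureTheory.MemLp (fun x : ℝ => x) 2 (Measure.map Y ℙ) := by
      rw [h]
      exact (memLp_two_iff_integrable_sq measurable_id.aestronglyMeasurable).mpr hi2
    have := (memLp_map_measure_iff measurable_id.aestronglyMeasurable
      hY.aemeasurable).mp hmap
    simpa using this
  have hEY : (∫ ω, Y ω ∂ℙ) = m := by
    rw [← hm, ← h, integral_map hY.aemeasurable (f := fun x : ℝ => x)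
      measurable_id.aestronglyMeasurable]
  have hEY2 : (∫ ω, (Y ω)^2 ∂ℙ) = (v : ℝ) + m^2 := by
    rw [← hsq, ← h, integral_map hY.aemeasurable (f := fun x : ℝ => x ^ 2)
      (measurable_id.pow_const 2).aestronglyMeasurable]
  refine ⟨hmem, ?_⟩
  rw [variance_eq_sub hmem]
  have h1 : (ℙ : Measure Ω)[Y ^ 2] = (v : ℝ) + m^2 := by
    rw [← hEY2]; congr 1
  have h2 : (ℙ : Measure Ω)[Y] = m := hEY
  rw [h1, h2]
  ring

end VarOfGauss
section SincBound

lemma sinc_sq_le_one (x : ℝ) : sinc x ^ 2 ≤ 1 := by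
  rcases eq_or_ne x 0 with h | h
  · simp [sinc, h]
  · have hpx : π * x ≠ 0 := mul_ne_zero Real.pi_ne_zero h
    rw [sinc, if_neg h, div_pow, div_le_one (by positivity)]
    rw [← sq_abs (Real.sin (π * x)), ← sq_abs (π * x)]
    exact pow_le_pow_left₀ (abs_nonneg _) Real.abs_sin_le_abs 2

lemma sinc_sq_le_inv (x : ℝ) (hx : x ≠ 0) : sinc x ^ 2 ≤ (π ^ 2 * x ^ 2)⁻¹ := by
  have hpx : π * x ≠ 0 := mul_ne_zero Real.pi_ne_zero hx
  rw [sinc, if_neg hx, div_pow, ← one_div]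
  have h1 : (π * x) ^ 2 = π ^ 2 * x ^ 2 := by ring
  rw [h1]
  gcongr
  exact Real.sin_sq_le_one _

/-- The comparison function on shifted indices. -/
noncomputable def sincG (k : ℤ) : ℝ :=
  if |k| ≤ 1 then 1 else (π ^ 2 * (((|k| : ℤ) : ℝ) - 1) ^ 2)⁻¹

lemma sincG_nonneg (k : ℤ) : 0 ≤ sincG k := by
  rw [sincG]
  split
  · exact zero_le_one
  · positivity

lemma sinc_sq_le_sincG (t : ℝ) (n : ℤ) : sinc (t - n) ^ 2 ≤ sincG (n - round t) := by
  rw [sincG]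
  split
  · exact sinc_sq_le_one _
  · rename_i hk
    push_neg at hk
    have hk2 : (2 : ℤ) ≤ |n - round t| := hk
    set k : ℝ := ((|n - round t| : ℤ) : ℝ) with hkdef
    have hk2' : (2:ℝ) ≤ k := by rw [hkdef]; exact_mod_cast hk2
    have hrt : |t - round t| ≤ 1/2 := abs_sub_round t
    have habs : k ≤ |t - (n:ℝ)| + 1/2 := by
      have h1 : k = |((n : ℝ) - round t)| := by
        rw [hkdef]; push_cast; ring_nf
      have h2 : |((n:ℝ) - round t)| ≤ |(n:ℝ) - t| + |t - round t| := by
        have := abs_sub_le ((n:ℝ)) t (round t)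
        simpa using this
      rw [h1]
      calc |((n:ℝ) - round t)| ≤ |(n:ℝ) - t| + |t - round t| := h2
        _ ≤ |t - (n:ℝ)| + 1/2 := by rw [abs_sub_comm]; linarith
    have hge : k - 1 ≤ |t - (n:ℝ)| := by linarith
    have hne : t - (n:ℝ) ≠ 0 := by
      intro h0
      rw [h0] at hge
      simp at hge
      linarith
    have hstep := sinc_sq_le_inv (t - n) hne
    have hk1 : (0:ℝ) < k - 1 := by linarith
    have hsq : (k - 1)^2 ≤ (t - (n:ℝ))^2 := by
      rw [← sq_abs (t - (n:ℝ))]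
      exact pow_le_pow_left₀ (le_of_lt hk1) hge 2
    have hpi2 : (0:ℝ) < π ^ 2 := by positivity
    have hfinal : (π ^ 2 * (t - (n:ℝ)) ^ 2)⁻¹ ≤ (π ^ 2 * (k - 1) ^ 2)⁻¹ := by
      apply inv_anti₀ (mul_pos hpi2 (pow_pos hk1 2))
      exact mul_le_mul_of_nonneg_left hsq (le_of_lt hpi2)
    exact hstep.trans hfinal

lemma sum_inv_sq_nat : ∀ N : ℕ, ∑ i ∈ Finset.range N, (((i:ℝ) + 1) ^ 2)⁻¹ ≤ 2 - 2 / ((N:ℝ) + 1) := by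
  intro N
  induction N with
  | zero => simp
  | succ N ih =>
    rw [Finset.sum_range_succ]
    have hN : (0:ℝ) < (N:ℝ) + 1 := by positivity
    have hN2 : (0:ℝ) < (N:ℝ) + 2 := by positivity
    have key : (((N:ℝ) + 1) ^ 2)⁻¹ ≤ 2 / ((N:ℝ) + 1) - 2 / ((N:ℝ) + 2) := by
      rw [div_sub_div _ _ (ne_of_gt hN) (ne_of_gt hN2), ← one_div, div_le_div_iff₀ (by positivity) (by positivity)]
      nlinarith [sq_nonneg ((N:ℝ))]
    push_cast
    have heq2 : ((N:ℝ) + 1 + 1) = (N:ℝ) + 2 := by ring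
    rw [heq2]
    linarith

lemma sum_inv_sq_int (S : Finset ℤ) (hS : ∀ k ∈ S, 1 ≤ k) :
    ∑ k ∈ S, (((k:ℝ)) ^ 2)⁻¹ ≤ 2 := by
  classical
  have hinj : Set.InjOn (fun k : ℤ => k.toNat) S := by
    intro a ha b hb hab
    have ha1 := hS a ha
    have hb1 := hS b hb
    simp only at hab
    omega
  have hsum : ∑ k ∈ S, (((k:ℝ)) ^ 2)⁻¹
      = ∑ i ∈ S.image (fun k : ℤ => k.toNat), (((i:ℝ)) ^ 2)⁻¹ := by
    rw [Finset.sum_image (fun a ha b hb hab => hinj ha hb hab)]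
    refine Finset.sum_congr rfl fun k hk => ?_
    have h1 : ((k.toNat : ℤ) : ℝ) = (k : ℝ) := by
      rw [Int.toNat_of_nonneg (by linarith [hS k hk])]
    congr 1
    rw [← h1]
    norm_cast
  rw [hsum]
  obtain ⟨n, hn⟩ := (S.image (fun k : ℤ => k.toNat)).exists_nat_subset_range
  calc ∑ i ∈ S.image (fun k : ℤ => k.toNat), (((i:ℝ)) ^ 2)⁻¹
      ≤ ∑ i ∈ Finset.range (n + 1), (((i:ℝ)) ^ 2)⁻¹ := by
        refine Finset.sum_le_sum_of_subset_of_nonneg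
          (hn.trans (Finset.range_subset_range.mpr (by omega))) (fun i _ _ => by positivity)
    _ = ∑ i ∈ Finset.range n, ((((i:ℝ)) + 1) ^ 2)⁻¹ := by
        rw [Finset.sum_range_succ']
        push_cast
        simp
    _ ≤ 2 - 2 / ((n:ℝ) + 1) := sum_inv_sq_nat n
    _ ≤ 2 := by
        have : (0:ℝ) ≤ 2 / ((n:ℝ) + 1) := by positivity
        linarith

lemma sum_sincG_le (T : Finset ℤ) : ∑ k ∈ T, sincG k ≤ 3 + 4 / π ^ 2 := by
  classical
  rw [← Finset.sum_filter_add_sum_filter_not T (fun k => |k| ≤ 1)]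
  have h1 : ∑ k ∈ T.filter (fun k => |k| ≤ 1), sincG k ≤ 3 := by
    have heq : ∀ k ∈ T.filter (fun k => |k| ≤ 1), sincG k = 1 := by
      intro k hk
      rw [sincG, if_pos (Finset.mem_filter.mp hk).2]
    rw [Finset.sum_congr rfl heq, Finset.sum_const, nsmul_eq_mul, mul_one]
    have hsub : T.filter (fun k => |k| ≤ 1) ⊆ Finset.Icc (-1) 1 := by
      intro k hk
      have := (Finset.mem_filter.mp hk).2
      rw [Finset.mem_Icc]
      simp only [Int.abs_eq_natAbs] at this
      omega
    have := Finset.card_le_card hsub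
    have hcard : (Finset.Icc (-1 : ℤ) 1).card = 3 := by decide
    calc ((T.filter (fun k => |k| ≤ 1)).card : ℝ) ≤ ((Finset.Icc (-1 : ℤ) 1).card : ℝ) := by
          exact_mod_cast this
      _ = 3 := by rw [hcard]; norm_num
  have hpart : ∀ P : Finset ℤ, (∀ k ∈ P, 2 ≤ |k|) →
      Set.InjOn (fun k : ℤ => |k| - 1) P →
      ∑ k ∈ P, ((((|k| : ℤ) : ℝ) - 1) ^ 2)⁻¹ ≤ 2 := by
    intro P h2 hinj
    have hsum : ∑ k ∈ P, ((((|k| : ℤ) : ℝ) - 1) ^ 2)⁻¹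
        = ∑ j ∈ P.image (fun k : ℤ => |k| - 1), (((j:ℝ)) ^ 2)⁻¹ := by
      rw [Finset.sum_image (fun a ha b hb hab => hinj ha hb hab)]
      refine Finset.sum_congr rfl fun k hk => ?_
      congr 1
      push_cast
      ring
    rw [hsum]
    refine sum_inv_sq_int _ fun j hj => ?_
    obtain ⟨k, hk, rfl⟩ := Finset.mem_image.mp hj
    have := h2 k hk
    simp only [Int.abs_eq_natAbs] at this ⊢
    omega
  have h2 : ∑ k ∈ T.filter (fun k => ¬|k| ≤ 1), sincG k ≤ 4 / π ^ 2 := by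
    set T2 := T.filter (fun k => ¬|k| ≤ 1) with hT2
    have hmem : ∀ k ∈ T2, 2 ≤ |k| := by
      intro k hk
      have h := (Finset.mem_filter.mp hk).2
      simp only [Int.abs_eq_natAbs] at h ⊢
      omega
    have heq : ∀ k ∈ T2, sincG k = (π ^ 2)⁻¹ * ((((|k| : ℤ) : ℝ) - 1) ^ 2)⁻¹ := by
      intro k hk
      rw [sincG, if_neg (Finset.mem_filter.mp hk).2, mul_inv]
    rw [Finset.sum_congr rfl heq, ← Finset.mul_sum]
    have key : ∑ k ∈ T2, ((((|k| : ℤ) : ℝ) - 1) ^ 2)⁻¹ ≤ 4 := by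
      rw [← Finset.sum_filter_add_sum_filter_not T2 (fun k => 0 < k)]
      have hpos := hpart (T2.filter (fun k => 0 < k))
        (fun k hk => hmem k (Finset.mem_filter.mp hk).1)
        (by
          intro a ha b hb hab
          have ha2 := (Finset.mem_filter.mp ha).2
          have hb2 := (Finset.mem_filter.mp hb).2
          simp only [Int.abs_eq_natAbs] at hab
          omega)
      have hneg := hpart (T2.filter (fun k => ¬0 < k))
        (fun k hk => hmem k (Finset.mem_filter.mp hk).1)
        (by
          intro a ha b hb hab
          have ha2 := (Finset.mem_filter.mp ha).2
          have hb2 := (Finset.mem_filter.mp hb).2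
          simp only [Int.abs_eq_natAbs] at hab
          omega)
      linarith
    have hpi : (0:ℝ) < π ^ 2 := by positivity
    calc (π ^ 2)⁻¹ * ∑ k ∈ T2, ((((|k| : ℤ) : ℝ) - 1) ^ 2)⁻¹
        ≤ (π ^ 2)⁻¹ * 4 :=
          mul_le_mul_of_nonneg_left key (inv_nonneg.mpr (le_of_lt hpi))
      _ = 4 / π ^ 2 := by rw [inv_mul_eq_div]
  linarith

end SincBound
lemma sum_sinc_sq_le (t : ℝ) (s : Finset ℤ) :
    ∑ n ∈ s, sinc (t - (n : ℝ)) ^ 2 ≤ 3 + 4 / π ^ 2 := by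
  classical
  calc ∑ n ∈ s, sinc (t - (n : ℝ)) ^ 2
      ≤ ∑ n ∈ s, sincG (n - round t) :=
        Finset.sum_le_sum fun n _ => sinc_sq_le_sincG t n
    _ = ∑ k ∈ s.image (fun n => n - round t), sincG k := by
        rw [Finset.sum_image (by intro a _ b _ h; simp only at h; omega)]
    _ ≤ 3 + 4 / π ^ 2 := sum_sincG_le _

/-- Variance propagation through cardinal sine interpolation: for independent Gaussian
random variables `X n ~ N(m n, v n)`, `n ∈ {-q, …, q}`, the interpolant
`X_interp(t) = ∑ₙ sinc(t - n) Xₙ` has variance `∑ₙ sinc²(t - n) vₙ`, which is at most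
`(3 + 4/π²) maxₙ vₙ`. -/
theorem sinc_variance_propagation
    (q : ℕ) {Ω : Type*} [MeasureSpace Ω] [IsProbabilityMeasure (ℙ : Measure Ω)]
    (X : {n : ℤ // n ∈ Finset.Icc (-(q : ℤ)) (q : ℤ)} → Ω → ℝ)
    (m : {n : ℤ // n ∈ Finset.Icc (-(q : ℤ)) (q : ℤ)} → ℝ)
    (v : {n : ℤ // n ∈ Finset.Icc (-(q : ℤ)) (q : ℤ)} → ℝ≥0)
    (hmeas : ∀ n, Measurable (X n))
    (hindep : iIndepFun X ℙ)
    (hgauss : ∀ n, Measure.map (X n) ℙ = gaussianReal (m n) (v n))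
    (t : ℝ) :
    variance (fun ω => ∑ n : {n : ℤ // n ∈ Finset.Icc (-(q : ℤ)) (q : ℤ)}, sinc (t - ((n : ℤ) : ℝ)) * X n ω) ℙ =
        ∑ n : {n : ℤ // n ∈ Finset.Icc (-(q : ℤ)) (q : ℤ)}, sinc (t - ((n : ℤ) : ℝ)) ^ 2 * ((v n : ℝ)) ∧
    variance (fun ω => ∑ n : {n : ℤ // n ∈ Finset.Icc (-(q : ℤ)) (q : ℤ)}, sinc (t - ((n : ℤ) : ℝ)) * X n ω) ℙ ≤
        (3 + 4 / π ^ 2) * ⨆ n, ((v n : ℝ)) := by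
  classical
  have hne : Nonempty {n : ℤ // n ∈ Finset.Icc (-(q : ℤ)) (q : ℤ)} :=
    ⟨⟨0, Finset.mem_Icc.mpr (by omega)⟩⟩
  set c : {n : ℤ // n ∈ Finset.Icc (-(q : ℤ)) (q : ℤ)} → ℝ := fun n => sinc (t - ((n : ℤ) : ℝ)) with hc
  have hfacts : ∀ n : {n : ℤ // n ∈ Finset.Icc (-(q : ℤ)) (q : ℤ)}, MeasureTheory.MemLp (X n) 2 ℙ ∧ variance (X n) ℙ = (v n : ℝ) :=
    fun n => var_of_gauss (hmeas n) (hgauss n)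
  set Y : {n : ℤ // n ∈ Finset.Icc (-(q : ℤ)) (q : ℤ)} → Ω → ℝ := fun n ω => c n * X n ω with hY
  have hYmem : ∀ n : {n : ℤ // n ∈ Finset.Icc (-(q : ℤ)) (q : ℤ)}, MeasureTheory.MemLp (Y n) 2 ℙ := fun n => (hfacts n).1.const_mul (c n)
  have hpair : Set.Pairwise ↑(Finset.univ : Finset {n : ℤ // n ∈ Finset.Icc (-(q : ℤ)) (q : ℤ)})
      fun i j => IndepFun (Y i) (Y j) ℙ := by
    intro i _ j _ hij
    exact (hindep.indepFun hij).comp (measurable_const_mul (c i)) (measurable_const_mul (c j))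
  have hfun : (fun ω => ∑ n : {n : ℤ // n ∈ Finset.Icc (-(q : ℤ)) (q : ℤ)}, c n * X n ω) = ∑ n : {n : ℤ // n ∈ Finset.Icc (-(q : ℤ)) (q : ℤ)}, Y n := by
    funext ω
    rw [Finset.sum_apply]
  have hvar : variance (fun ω => ∑ n : {n : ℤ // n ∈ Finset.Icc (-(q : ℤ)) (q : ℤ)}, c n * X n ω) ℙ = ∑ n : {n : ℤ // n ∈ Finset.Icc (-(q : ℤ)) (q : ℤ)}, c n ^ 2 * (v n : ℝ) := by
    rw [hfun, IndepFun.variance_sum (fun i _ => hYmem i) hpair]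
    refine Finset.sum_congr rfl fun n _ => ?_
    rw [hY]
    rw [variance_const_mul (c n) (X n)]
    rw [(hfacts n).2]
  refine ⟨hvar, ?_⟩
  rw [hvar]
  set M : ℝ := ⨆ n : {n : ℤ // n ∈ Finset.Icc (-(q : ℤ)) (q : ℤ)}, ((v n : ℝ)) with hM
  have hMle : ∀ n : {n : ℤ // n ∈ Finset.Icc (-(q : ℤ)) (q : ℤ)}, (v n : ℝ) ≤ M := fun n =>
    le_ciSup (f := fun n : {n : ℤ // n ∈ Finset.Icc (-(q : ℤ)) (q : ℤ)} => ((v n : ℝ)))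
      (Set.Finite.bddAbove (Set.finite_range _)) n
  have hM0 : 0 ≤ M := le_trans (v hne.some).coe_nonneg (hMle _)
  have hsum1 : ∑ n : {n : ℤ // n ∈ Finset.Icc (-(q : ℤ)) (q : ℤ)}, c n ^ 2 * (v n : ℝ) ≤ (∑ n : {n : ℤ // n ∈ Finset.Icc (-(q : ℤ)) (q : ℤ)}, c n ^ 2) * M := by
    rw [Finset.sum_mul]
    refine Finset.sum_le_sum fun n _ => ?_
    exact mul_le_mul_of_nonneg_left (hMle n) (sq_nonneg _)
  have hsum2 : ∑ n : {n : ℤ // n ∈ Finset.Icc (-(q : ℤ)) (q : ℤ)}, c n ^ 2 ≤ 3 + 4 / π ^ 2 := by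
    have h := sum_sinc_sq_le t (Finset.Icc (-(q : ℤ)) (q : ℤ))
    rw [← Finset.sum_coe_sort (Finset.Icc (-(q : ℤ)) (q : ℤ))
      (fun n : ℤ => sinc (t - (n : ℝ)) ^ 2)] at h
    exact h
  calc ∑ n : {n : ℤ // n ∈ Finset.Icc (-(q : ℤ)) (q : ℤ)}, c n ^ 2 * (v n : ℝ) ≤ (∑ n : {n : ℤ // n ∈ Finset.Icc (-(q : ℤ)) (q : ℤ)}, c n ^ 2) * M := hsum1
    _ ≤ (3 + 4 / π ^ 2) * M := mul_le_mul_of_nonneg_right hsum2 hM0
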